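/- For all integers p ≥ 4 and k ≥ p−2, we have g^k_{p−2}(p) = k+2; that is, every Gallai-k-coloring of K_{k+2} contains a set of p vertices spanning edges in at most p−2 colors, and there exists a Gallai-k-coloring of K_{k+1} in which every set of p vertices spans edges in at least p−1 colors. -/

import Mathlib

open Finset

/-- A Gallai coloring: a symmetric edge-coloring of the complete graph on `V`
with no rainbow triangle. -/
def IsGallai {V β : Type*} (c : V → V → β) : Prop :=
  (∀ a b, c a b = c b a) ∧
  ∀ a b d : V, a ≠ b → a ≠ d → b ≠ d →
    ¬(c a b ≠ c a d ∧ c a b ≠ c b d ∧ c a d ≠ c b d)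

/-- The set of colors appearing on edges inside the vertex set `S`. -/
def colorsOn {V β : Type*} [DecidableEq V] [DecidableEq β]
    (c : V → V → β) (S : Finset V) : Finset β :=
  ((S ×ˢ S).filter fun p => p.1 ≠ p.2).image fun p => c p.1 p.2

set_option linter.unusedSectionVars false
set_option linter.unusedVariables false

section Basic
variable {V β : Type*} [DecidableEq V] [DecidableEq β] {c : V → V → β} {S T : Finset V} {γ : β}

lemma mem_colorsOn :
    γ ∈ colorsOn c S ↔ ∃ a, a ∈ S ∧ ∃ b, b ∈ S ∧ a ≠ b ∧ c a b = γ := by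
  simp only [colorsOn, mem_image, mem_filter, mem_product, Prod.exists]
  constructor
  · rintro ⟨a, b, ⟨⟨ha, hb⟩, hab⟩, rfl⟩; exact ⟨a, ha, b, hb, hab, rfl⟩
  · rintro ⟨a, ha, b, hb, hab, rfl⟩; exact ⟨a, b, ⟨⟨ha, hb⟩, hab⟩, rfl⟩

lemma colorsOn_mono (h : S ⊆ T) : colorsOn c S ⊆ colorsOn c T := by
  intro γ hγ
  rw [mem_colorsOn] at hγ ⊢
  obtain ⟨a, ha, b, hb, hab, rfl⟩ := hγ
  exact ⟨a, h ha, b, h hb, hab, rfl⟩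

/-- Lemma E: deleting one vertex loses at most one color. -/
lemma card_colorsOn_le_erase (hc : IsGallai c) (S : Finset V) (v : V) :
    (colorsOn c S).card ≤ (colorsOn c (S.erase v)).card + 1 := by
  classical
  have hkey : ∀ γ ∈ colorsOn c S, γ ∉ colorsOn c (S.erase v) →
      ∃ x, x ∈ S.erase v ∧ c v x = γ := by
    intro γ hγ hγ'
    rw [mem_colorsOn] at hγ
    obtain ⟨a, ha, b, hb, hab, rfl⟩ := hγ
    rcases eq_or_ne a v with hav | hav
    · refine ⟨b, mem_erase.2 ⟨fun h => hab (hav.trans h.symm), hb⟩, ?_⟩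
      rw [hav]
    · rcases eq_or_ne b v with hbv | hbv
      · refine ⟨a, mem_erase.2 ⟨hav, ha⟩, ?_⟩
        rw [hbv]
        exact hc.1 v a
      · exact absurd (mem_colorsOn.2 ⟨a, mem_erase.2 ⟨hav, ha⟩, b, mem_erase.2 ⟨hbv, hb⟩, hab, rfl⟩) hγ'
  have h1 : ((colorsOn c S) \ colorsOn c (S.erase v)).card ≤ 1 := by
    rw [Finset.card_le_one]
    intro γ hγ δ hδ
    rw [mem_sdiff] at hγ hδ
    obtain ⟨x, hx, hγx⟩ := hkey γ hγ.1 hγ.2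
    obtain ⟨y, hy, hδy⟩ := hkey δ hδ.1 hδ.2
    by_cases hxy : x = y
    · rw [← hγx, ← hδy, hxy]
    · have hvx : v ≠ x := fun h => (mem_erase.1 hx).1 (h.symm)
      have hvy : v ≠ y := fun h => (mem_erase.1 hy).1 (h.symm)
      have := hc.2 v x y hvx hvy hxy
      have hxS : x ∈ S := (mem_erase.1 hx).2
      have hyS : y ∈ S := (mem_erase.1 hy).2
      have hxyc : c x y ∈ colorsOn c (S.erase v) :=
        mem_colorsOn.2 ⟨x, hx, y, hy, hxy, rfl⟩
      by_cases h1 : c v x = c v y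
      · rw [← hγx, ← hδy, h1]
      · exfalso
        by_cases h2 : c v x = c x y
        · exact hγ.2 (by rw [← hγx, h2]; exact hxyc)
        · by_cases h3 : c v y = c x y
          · exact hδ.2 (by rw [← hδy, h3]; exact hxyc)
          · exact this ⟨h1, h2, h3⟩
  calc (colorsOn c S).card ≤ (colorsOn c (S.erase v) ∪ ((colorsOn c S) \ colorsOn c (S.erase v))).card := by
        apply Finset.card_le_card
        intro γ hγ
        by_cases h : γ ∈ colorsOn c (S.erase v)
        · exact mem_union_left _ h
        · exact mem_union_right _ (mem_sdiff.2 ⟨hγ, h⟩)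
    _ ≤ (colorsOn c (S.erase v)).card + ((colorsOn c S) \ colorsOn c (S.erase v)).card :=
        Finset.card_union_le _ _
    _ ≤ (colorsOn c (S.erase v)).card + 1 := by omega

/-- Any Gallai coloring on `m` vertices uses at most `m - 1` colors. -/
lemma card_colorsOn_le (hc : IsGallai c) :
    ∀ (n : ℕ) (S : Finset V), S.card = n → (colorsOn c S).card ≤ n - 1 := by
  intro n
  induction n with
  | zero =>
    intro S hcard
    have : S = ∅ := Finset.card_eq_zero.1 hcard
    subst this
    simp [colorsOn]
  | succ n ih =>
    intro S hcard
    rcases Nat.eq_zero_or_pos n with hn | hn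
    · have hempty : colorsOn c S = ∅ := by
        rw [eq_empty_iff_forall_notMem]
        intro γ hγ
        rw [mem_colorsOn] at hγ
        obtain ⟨a, ha, b, hb, hab, _⟩ := hγ
        have hle : S.card ≤ 1 := by omega
        exact hab (Finset.card_le_one.1 hle a ha b hb)
      simp [hempty]
    · have hpos : 0 < S.card := by omega
      obtain ⟨v, hv⟩ := Finset.card_pos.1 hpos
      have hce : (S.erase v).card = n := by
        rw [Finset.card_erase_of_mem hv, hcard]
        omega
      have h1 := ih (S.erase v) hce
      have h2 := card_colorsOn_le_erase hc S v
      omega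

end Basic

section LemmaL
variable {V β : Type*} [DecidableEq V] [DecidableEq β]

/-- `a b` is an edge of color `γ` inside `S`. -/
def EdgeOf (c : V → V → β) (S : Finset V) (γ : β) (a b : V) : Prop :=
  a ∈ S ∧ b ∈ S ∧ a ≠ b ∧ c a b = γ

/-- The pair `{u,v}` is "served" by color `γ`: every `γ`-edge inside `S` touches `{u,v}`. -/
def ServedU (c : V → V → β) (S : Finset V) (γ : β) (u v : V) : Prop :=
  u ∈ S ∧ v ∈ S ∧ u ≠ v ∧
  ∀ a b, EdgeOf c S γ a b → a = u ∨ a = v ∨ b = u ∨ b = v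

lemma EdgeOf.symm {c : V → V → β} {S γ a b} (hc : IsGallai c)
    (h : EdgeOf c S γ a b) : EdgeOf c S γ b a :=
  ⟨h.2.1, h.1, h.2.2.1.symm, (hc.1 b a).trans h.2.2.2⟩

lemma ServedU.symm {c : V → V → β} {S γ u v} (h : ServedU c S γ u v) :
    ServedU c S γ v u := by
  obtain ⟨h1, h2, h3, h4⟩ := h
  exact ⟨h2, h1, h3.symm, fun a b he => by rcases h4 a b he with h|h|h|h <;> tauto⟩

noncomputable def PP [LinearOrder V] (c : V → V → β) (S : Finset V) (γ : β) : Finset (V × V) :=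
  @Finset.filter _ (fun p => p.1 < p.2 ∧ ServedU c S γ p.1 p.2)
    (fun _ => Classical.propDecidable _) S.offDiag

def clsO (c : V → V → β) (S : Finset V) (γ : β) : Finset (V × V) :=
  S.offDiag.filter fun p => c p.1 p.2 = γ

lemma mem_PP [LinearOrder V] {c : V → V → β} {S : Finset V} {γ : β} {q : V × V} :
    q ∈ PP c S γ ↔ (q.1 ∈ S ∧ q.2 ∈ S ∧ q.1 ≠ q.2) ∧ q.1 < q.2 ∧ ServedU c S γ q.1 q.2 := by
  simp only [PP, Finset.mem_filter, Finset.mem_offDiag]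

lemma mem_clsO {c : V → V → β} {S : Finset V} {γ : β} {q : V × V} :
    q ∈ clsO c S γ ↔ EdgeOf c S γ q.1 q.2 := by
  rw [clsO, Finset.mem_filter, Finset.mem_offDiag, EdgeOf]
  tauto

/-- Counting unordered pairs: twice the number of `<`-sorted pairs is `|T|^2 - |T|`. -/
lemma two_mul_card_filter_lt [LinearOrder V] (T : Finset V) :
    2 * (T.offDiag.filter fun p => p.1 < p.2).card = T.card * T.card - T.card := by
  classical
  have hunion : (T.offDiag.filter fun p => p.1 < p.2) ∪ (T.offDiag.filter fun p => p.2 < p.1)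
      = T.offDiag := by
    ext p
    simp only [Finset.mem_union, Finset.mem_filter]
    constructor
    · rintro (⟨h, _⟩ | ⟨h, _⟩) <;> exact h
    · intro h
      rcases lt_or_gt_of_ne (Finset.mem_offDiag.1 h).2.2 with h' | h'
      · exact Or.inl ⟨h, h'⟩
      · exact Or.inr ⟨h, h'⟩
  have hdisj : Disjoint (T.offDiag.filter fun p => p.1 < p.2)
      (T.offDiag.filter fun p => p.2 < p.1) := by
    rw [Finset.disjoint_left]
    intro p h1 h2
    exact absurd ((Finset.mem_filter.1 h1).2.trans (Finset.mem_filter.1 h2).2) (lt_irrefl _)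
  have hcards : (T.offDiag.filter fun p => p.1 < p.2).card
      = (T.offDiag.filter fun p => p.2 < p.1).card := by
    apply Finset.card_nbij' (fun p => (p.2, p.1)) (fun p => (p.2, p.1))
    · intro p hp
      simp only [Finset.mem_coe, Finset.mem_filter, Finset.mem_offDiag] at hp ⊢
      exact ⟨⟨hp.1.2.1, hp.1.1, fun h => hp.1.2.2 h.symm⟩, hp.2⟩
    · intro p hp
      simp only [Finset.mem_coe, Finset.mem_filter, Finset.mem_offDiag] at hp ⊢
      exact ⟨⟨hp.1.2.1, hp.1.1, fun h => hp.1.2.2 h.symm⟩, hp.2⟩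
    · intro p _; rfl
    · intro p _; rfl
  have := Finset.card_union_of_disjoint hdisj
  rw [hunion] at this
  rw [Finset.offDiag_card] at this
  omega

end LemmaL

section LemmaL2
variable {V β : Type*} [DecidableEq V] [DecidableEq β] {c : V → V → β} {S : Finset V} {γ : β}

lemma exists_edge_avoiding (heq : ∀ v ∈ S, colorsOn c (S.erase v) = colorsOn c S)
    (hγ : γ ∈ colorsOn c S) {w : V} (hw : w ∈ S) :
    ∃ a b, EdgeOf c S γ a b ∧ a ≠ w ∧ b ≠ w := by
  have hmem : γ ∈ colorsOn c (S.erase w) := (heq w hw).symm ▸ hγ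
  rw [mem_colorsOn] at hmem
  obtain ⟨a, ha, b, hb, hab, hcab⟩ := hmem
  obtain ⟨haw, haS⟩ := Finset.mem_erase.1 ha
  obtain ⟨hbw, hbS⟩ := Finset.mem_erase.1 hb
  exact ⟨a, b, ⟨haS, hbS, hab, hcab⟩, haw, hbw⟩

lemma exists_served (hc : IsGallai c)
    (heq : ∀ v ∈ S, colorsOn c (S.erase v) = colorsOn c S)
    (ht : (colorsOn c S).card = S.card - 2) (h5 : 5 ≤ S.card)
    {u v : V} (hu : u ∈ S) (hv : v ∈ S) (huv : u ≠ v) :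
    ∃ γ, γ ∈ colorsOn c S ∧ ServedU c S γ u v := by
  have hu' : u ∈ S.erase v := Finset.mem_erase.2 ⟨huv, hu⟩
  have hce : (S.erase v).card = S.card - 1 := Finset.card_erase_of_mem hv
  have hcee : ((S.erase v).erase u).card = S.card - 2 := by
    rw [Finset.card_erase_of_mem hu', hce]
    omega
  have h1 : (colorsOn c ((S.erase v).erase u)).card ≤ S.card - 2 - 1 :=
    card_colorsOn_le hc _ _ hcee
  have h2 : (colorsOn c (S.erase v)).card = S.card - 2 := by rw [heq v hv, ht]
  have hnotsub : ¬ colorsOn c (S.erase v) ⊆ colorsOn c ((S.erase v).erase u) := by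
    intro h
    have := Finset.card_le_card h
    omega
  obtain ⟨γ, hγ1, hγ2⟩ := Finset.not_subset.1 hnotsub
  refine ⟨γ, colorsOn_mono (Finset.erase_subset _ _) hγ1, hu, hv, huv, ?_⟩
  intro a b he
  by_contra hcon
  push_neg at hcon
  obtain ⟨h1', h2', h3', h4'⟩ := hcon
  apply hγ2
  rw [mem_colorsOn]
  exact ⟨a, Finset.mem_erase.2 ⟨h1', Finset.mem_erase.2 ⟨h2', he.1⟩⟩,
    b, Finset.mem_erase.2 ⟨h3', Finset.mem_erase.2 ⟨h4', he.2.1⟩⟩, he.2.2.1, he.2.2.2⟩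

/-- the "cross" bound: if the class has two disjoint edges then at most 4 served pairs,
and in the extremal case all four cross pairs are served. -/
lemma cross_bound [LinearOrder V] {a b d e : V}
    (hE1 : EdgeOf c S γ a b) (hE2 : EdgeOf c S γ d e)
    (had : a ≠ d) (hae : a ≠ e) (hbd : b ≠ d) (hbe : b ≠ e) :
    (PP c S γ).card ≤ 4 ∧
    ((PP c S γ).card = 4 → ∀ x y, (x = a ∨ x = b) → (y = d ∨ y = e) → ServedU c S γ x y) := by
  classical
  set f : V × V → V × V := fun q => if q.1 = a ∨ q.1 = b then q else (q.2, q.1) with hf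
  have hmaps : ∀ q ∈ PP c S γ, f q ∈ ({a, b} : Finset V) ×ˢ ({d, e} : Finset V) := by
    intro q hq
    rw [mem_PP] at hq
    obtain ⟨⟨hq1S, hq2S, hqne⟩, hlt, hsv⟩ := hq
    have hit1 := hsv.2.2.2 a b hE1
    have hit2 := hsv.2.2.2 d e hE2
    by_cases h : q.1 = a ∨ q.1 = b
    · have hq2 : q.2 = d ∨ q.2 = e := by
        rcases hit2 with h2 | h2 | h2 | h2
        · exfalso; rcases h with h' | h'
          · exact had (h2.trans h').symm
          · exact hbd (h2.trans h').symm
        · exact Or.inl h2.symm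
        · exfalso; rcases h with h' | h'
          · exact hae (h2.trans h').symm
          · exact hbe (h2.trans h').symm
        · exact Or.inr h2.symm
      simp only [hf, if_pos h, Finset.mem_product, Finset.mem_insert, Finset.mem_singleton]
      exact ⟨h, hq2⟩
    · push_neg at h
      have hq2ab : q.2 = a ∨ q.2 = b := by
        rcases hit1 with h1 | h1 | h1 | h1
        · exact absurd h1.symm h.1
        · exact Or.inl h1.symm
        · exact absurd h1.symm h.2
        · exact Or.inr h1.symm
      have hq1de : q.1 = d ∨ q.1 = e := by
        rcases hit2 with h2 | h2 | h2 | h2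
        · exact Or.inl h2.symm
        · exfalso; rcases hq2ab with h' | h'
          · exact had ((h2.trans h').symm)
          · exact hbd ((h2.trans h').symm)
        · exact Or.inr h2.symm
        · exfalso; rcases hq2ab with h' | h'
          · exact hae ((h2.trans h').symm)
          · exact hbe ((h2.trans h').symm)
      have hcond : ¬ (q.1 = a ∨ q.1 = b) := by push_neg; exact h
      simp only [hf, if_neg hcond, Finset.mem_product, Finset.mem_insert, Finset.mem_singleton]
      exact ⟨hq2ab, hq1de⟩
  have hinj : Set.InjOn f (PP c S γ) := by
    intro q hq q' hq' hfe
    rw [Finset.mem_coe, mem_PP] at hq hq'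
    simp only [hf] at hfe
    by_cases h : q.1 = a ∨ q.1 = b <;> by_cases h' : q'.1 = a ∨ q'.1 = b
    · rw [if_pos h, if_pos h'] at hfe; exact hfe
    · rw [if_pos h, if_neg h'] at hfe
      have h1 : q.1 = q'.2 := congrArg Prod.fst hfe
      have h2 : q.2 = q'.1 := congrArg Prod.snd hfe
      have hlt : q'.2 < q'.1 := by rw [← h1, ← h2]; exact hq.2.1
      exact absurd hq'.2.1 (asymm hlt)
    · rw [if_neg h, if_pos h'] at hfe
      have h1 : q.2 = q'.1 := congrArg Prod.fst hfe
      have h2 : q.1 = q'.2 := congrArg Prod.snd hfe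
      have hlt : q'.2 < q'.1 := by rw [← h1, ← h2]; exact hq.2.1
      exact absurd hq'.2.1 (asymm hlt)
    · rw [if_neg h, if_neg h'] at hfe
      have h1 : q.2 = q'.2 := congrArg Prod.fst hfe
      have h2 : q.1 = q'.1 := congrArg Prod.snd hfe
      exact Prod.ext h2 h1
  have hab : a ≠ b := hE1.2.2.1
  have hde : d ≠ e := hE2.2.2.1
  have hcard2a : ({a, b} : Finset V).card = 2 := by
    rw [Finset.card_insert_of_notMem (by simp [hab]), Finset.card_singleton]
  have hcard2d : ({d, e} : Finset V).card = 2 := by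
    rw [Finset.card_insert_of_notMem (by simp [hde]), Finset.card_singleton]
  have hcardprod : (({a, b} : Finset V) ×ˢ ({d, e} : Finset V)).card = 4 := by
    rw [Finset.card_product, hcard2a, hcard2d]
  constructor
  · calc (PP c S γ).card ≤ (({a, b} : Finset V) ×ˢ ({d, e} : Finset V)).card :=
        Finset.card_le_card_of_injOn f hmaps hinj
    _ = 4 := hcardprod
  · intro hP4 x y hx hy
    have himage : (PP c S γ).image f = ({a, b} : Finset V) ×ˢ ({d, e} : Finset V) := by
      apply Finset.eq_of_subset_of_card_le
      · rw [Finset.image_subset_iff]; exact hmaps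
      · rw [Finset.card_image_of_injOn hinj, hP4, hcardprod]
    have hxy : (x, y) ∈ (PP c S γ).image f := by
      rw [himage, Finset.mem_product]
      constructor
      · simp only [Finset.mem_insert, Finset.mem_singleton]; exact hx
      · simp only [Finset.mem_insert, Finset.mem_singleton]; exact hy
    obtain ⟨q, hqP, hfq⟩ := Finset.mem_image.1 hxy
    have hsv := (mem_PP.1 hqP).2.2
    simp only [hf] at hfq
    by_cases h : q.1 = a ∨ q.1 = b
    · rw [if_pos h] at hfq
      have h1 : q.1 = x := congrArg Prod.fst hfq
      have h2 : q.2 = y := congrArg Prod.snd hfq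
      rw [← h1, ← h2]; exact hsv
    · rw [if_neg h] at hfq
      have h1 : q.2 = x := congrArg Prod.fst hfq
      have h2 : q.1 = y := congrArg Prod.snd hfq
      rw [← h1, ← h2]; exact hsv.symm

end LemmaL2

section LemmaL3
variable {V β : Type*} [DecidableEq V] [DecidableEq β] {c : V → V → β} {S : Finset V} {γ : β}

lemma card_le_six {α : Type*} [DecidableEq α] {s : Finset α} {x1 x2 x3 x4 x5 x6 : α}
    (h : s ⊆ {x1, x2, x3, x4, x5, x6}) : s.card ≤ 6 := by
  apply (Finset.card_le_card h).trans
  refine (Finset.card_insert_le _ _).trans (Nat.add_le_add_right ?_ 1)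
  refine (Finset.card_insert_le _ _).trans (Nat.add_le_add_right ?_ 1)
  refine (Finset.card_insert_le _ _).trans (Nat.add_le_add_right ?_ 1)
  refine (Finset.card_insert_le _ _).trans (Nat.add_le_add_right ?_ 1)
  refine (Finset.card_insert_le _ _).trans (Nat.add_le_add_right ?_ 1)
  simp

/-- In the extremal 4-pair case, the class is exactly one pair of disjoint edges. -/
lemma cross_class (hc : IsGallai c) {a b d e : V}
    (hE1 : EdgeOf c S γ a b) (hE2 : EdgeOf c S γ d e)
    (had : a ≠ d) (hae : a ≠ e) (hbd : b ≠ d) (hbe : b ≠ e)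
    (hall : ∀ x y, (x = a ∨ x = b) → (y = d ∨ y = e) → ServedU c S γ x y) :
    clsO c S γ = ({(a, b), (b, a), (d, e), (e, d)} : Finset (V × V)) := by
  have hab : a ≠ b := hE1.2.2.1
  have hde : d ≠ e := hE2.2.2.1
  apply Finset.Subset.antisymm
  · intro q hq
    rw [mem_clsO] at hq
    have h1 := (hall a d (Or.inl rfl) (Or.inl rfl)).2.2.2 q.1 q.2 hq
    have h2 := (hall a e (Or.inl rfl) (Or.inr rfl)).2.2.2 q.1 q.2 hq
    have h3 := (hall b d (Or.inr rfl) (Or.inl rfl)).2.2.2 q.1 q.2 hq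
    have h4 := (hall b e (Or.inr rfl) (Or.inr rfl)).2.2.2 q.1 q.2 hq
    have hA : q.1 = a ∨ q.2 = a ∨ (q.1 = d ∧ q.2 = e) ∨ (q.1 = e ∧ q.2 = d) := by
      rcases h1 with h | h | h | h
      · exact Or.inl h
      · rcases h2 with g | g | g | g
        · exact Or.inl g
        · exact absurd (h.symm.trans g) hde
        · exact Or.inr (Or.inl g)
        · exact Or.inr (Or.inr (Or.inl ⟨h, g⟩))
      · exact Or.inr (Or.inl h)
      · rcases h2 with g | g | g | g
        · exact Or.inl g
        · exact Or.inr (Or.inr (Or.inr ⟨g, h⟩))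
        · exact Or.inr (Or.inl g)
        · exact absurd (h.symm.trans g) hde
    have hB : q.1 = b ∨ q.2 = b ∨ (q.1 = d ∧ q.2 = e) ∨ (q.1 = e ∧ q.2 = d) := by
      rcases h3 with h | h | h | h
      · exact Or.inl h
      · rcases h4 with g | g | g | g
        · exact Or.inl g
        · exact absurd (h.symm.trans g) hde
        · exact Or.inr (Or.inl g)
        · exact Or.inr (Or.inr (Or.inl ⟨h, g⟩))
      · exact Or.inr (Or.inl h)
      · rcases h4 with g | g | g | g
        · exact Or.inl g
        · exact Or.inr (Or.inr (Or.inr ⟨g, h⟩))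
        · exact Or.inr (Or.inl g)
        · exact absurd (h.symm.trans g) hde
    simp only [Finset.mem_insert, Finset.mem_singleton, Prod.ext_iff]
    rcases hA with h | h | h | h
    · rcases hB with g | g | g | g
      · exact absurd (h.symm.trans g) hab
      · exact Or.inl ⟨h, g⟩
      · exact absurd (h.symm.trans g.1) had
      · exact absurd (h.symm.trans g.1) hae
    · rcases hB with g | g | g | g
      · exact Or.inr (Or.inl ⟨g, h⟩)
      · exact absurd (h.symm.trans g) hab
      · exact absurd (h.symm.trans g.2) hae
      · exact absurd (h.symm.trans g.2) had
    · exact Or.inr (Or.inr (Or.inl ⟨h.1, h.2⟩))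
    · exact Or.inr (Or.inr (Or.inr ⟨h.1, h.2⟩))
  · intro q hq
    simp only [Finset.mem_insert, Finset.mem_singleton] at hq
    rcases hq with rfl | rfl | rfl | rfl
    · exact mem_clsO.2 hE1
    · exact mem_clsO.2 (hE1.symm hc)
    · exact mem_clsO.2 hE2
    · exact mem_clsO.2 (hE2.symm hc)

lemma core_bound {a b c0 z : V}
    (hsab : ServedU c S γ a b) (hsac : ServedU c S γ a c0) (hsbz : ServedU c S γ b z)
    (hbc : b ≠ c0) (hza : z ≠ a) :
    (clsO c S γ).card ≤ 6 := by
  have hab : a ≠ b := hsab.2.2.1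
  have haz : a ≠ z := fun h => hza h.symm
  apply card_le_six (x1 := (a, b)) (x2 := (b, a)) (x3 := (a, z)) (x4 := (z, a))
    (x5 := (b, c0)) (x6 := (c0, b))
  intro q hq
  rw [mem_clsO] at hq
  have h1 := hsab.2.2.2 q.1 q.2 hq
  have h2 := hsac.2.2.2 q.1 q.2 hq
  have h3 := hsbz.2.2.2 q.1 q.2 hq
  simp only [Finset.mem_insert, Finset.mem_singleton, Prod.ext_iff]
  by_cases hq1a : q.1 = a
  · rcases h3 with h | h | h | h
    · exact absurd (hq1a.symm.trans h) hab
    · exact absurd (hq1a.symm.trans h) haz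
    · exact Or.inl ⟨hq1a, h⟩
    · exact Or.inr (Or.inr (Or.inl ⟨hq1a, h⟩))
  · by_cases hq2a : q.2 = a
    · rcases h3 with h | h | h | h
      · exact Or.inr (Or.inl ⟨h, hq2a⟩)
      · exact Or.inr (Or.inr (Or.inr (Or.inl ⟨h, hq2a⟩)))
      · exact absurd (hq2a.symm.trans h) hab
      · exact absurd (hq2a.symm.trans h) haz
    · have hb : q.1 = b ∨ q.2 = b := by
        rcases h1 with h | h | h | h
        · exact absurd h hq1a
        · exact Or.inl h
        · exact absurd h hq2a
        · exact Or.inr h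
      have hcc : q.1 = c0 ∨ q.2 = c0 := by
        rcases h2 with h | h | h | h
        · exact absurd h hq1a
        · exact Or.inl h
        · exact absurd h hq2a
        · exact Or.inr h
      rcases hb with h | h
      · rcases hcc with g | g
        · exact absurd (h.symm.trans g) hbc
        · exact Or.inr (Or.inr (Or.inr (Or.inr (Or.inl ⟨h, g⟩))))
      · rcases hcc with g | g
        · exact Or.inr (Or.inr (Or.inr (Or.inr (Or.inr ⟨g, h⟩))))
        · exact absurd (h.symm.trans g) hbc

lemma triangle_bound [LinearOrder V] {u v w : V}
    (hEuv : EdgeOf c S γ u v) (hEvw : EdgeOf c S γ v w) (hEuw : EdgeOf c S γ u w) :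
    (PP c S γ).card ≤ 3 := by
  classical
  set T : Finset V := {u, v, w} with hT
  have hsub : PP c S γ ⊆ T.offDiag.filter fun p => p.1 < p.2 := by
    intro q hq
    rw [mem_PP] at hq
    obtain ⟨⟨hq1S, hq2S, hqne⟩, hlt, hsv⟩ := hq
    have hit1 := hsv.2.2.2 u v hEuv
    have hit2 := hsv.2.2.2 v w hEvw
    have hit3 := hsv.2.2.2 u w hEuw
    have huv : u ≠ v := hEuv.2.2.1
    have hvw : v ≠ w := hEvw.2.2.1
    have huw : u ≠ w := hEuw.2.2.1
    have hmem : q.1 ∈ T ∧ q.2 ∈ T := by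
      simp only [hT, Finset.mem_insert, Finset.mem_singleton]
      rcases hit1 with h | h | h | h <;> rcases hit2 with g | g | g | g <;>
        rcases hit3 with f | f | f | f <;> simp_all
    exact Finset.mem_filter.2 ⟨Finset.mem_offDiag.2 ⟨hmem.1, hmem.2, hqne⟩, hlt⟩
  have h2 := two_mul_card_filter_lt T
  have hTcard : T.card ≤ 3 := by
    refine (Finset.card_insert_le _ _).trans (Nat.add_le_add_right ?_ 1)
    refine (Finset.card_insert_le _ _).trans (Nat.add_le_add_right ?_ 1)
    simp
  have hsq : T.card * T.card ≤ 3 * T.card := Nat.mul_le_mul_right _ hTcard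
  have := Finset.card_le_card hsub
  omega

end LemmaL3

section LemmaL4
variable {V β : Type*} [DecidableEq V] [DecidableEq β] {c : V → V → β} {S : Finset V} {γ : β}

lemma share_case (hc : IsGallai c)
    (heq : ∀ v ∈ S, colorsOn c (S.erase v) = colorsOn c S)
    (hγ : γ ∈ colorsOn c S) {a b c0 x y : V}
    (hsab : ServedU c S γ a b) (hsac : ServedU c S γ a c0) (hbc : b ≠ c0)
    (hq3 : ServedU c S γ x y)
    (hne1 : ¬(x = a ∧ y = b)) (hne2 : ¬(x = b ∧ y = a))
    (hne3 : ¬(x = a ∧ y = c0)) (hne4 : ¬(x = c0 ∧ y = a)) :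
    (clsO c S γ).card ≤ 6 := by
  have haS : a ∈ S := hsab.1
  obtain ⟨p, q, hE0, hpa, hqa⟩ := exists_edge_avoiding heq hγ haS
  have hEbc : EdgeOf c S γ b c0 := by
    have h1 := hsab.2.2.2 p q hE0
    have h2 := hsac.2.2.2 p q hE0
    rcases h1 with h | h | h | h
    · exact absurd h hpa
    · rcases h2 with g | g | g | g
      · exact absurd g hpa
      · exact absurd (h.symm.trans g) hbc
      · exact absurd g hqa
      · rw [h, g] at hE0; exact hE0
    · exact absurd h hqa
    · rcases h2 with g | g | g | g
      · exact absurd g hpa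
      · rw [g, h] at hE0; exact hE0.symm hc
      · exact absurd g hqa
      · exact absurd (h.symm.trans g) hbc
  have h3 := hq3.2.2.2 b c0 hEbc
  rcases h3 with h | h | h | h
  · -- b = x, z := y
    have hsbz : ServedU c S γ b y := by rw [h]; exact hq3
    exact core_bound hsab hsac hsbz hbc (fun hya => hne2 ⟨h.symm, hya⟩)
  · -- b = y, z := x
    have hsbz : ServedU c S γ b x := by rw [h]; exact hq3.symm
    exact core_bound hsab hsac hsbz hbc (fun hxa => hne1 ⟨hxa, h.symm⟩)
  · -- c0 = x, z := y, swap roles of b and c0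
    have hsbz : ServedU c S γ c0 y := by rw [h]; exact hq3
    exact core_bound hsac hsab hsbz (fun hh => hbc hh.symm) (fun hya => hne4 ⟨h.symm, hya⟩)
  · -- c0 = y, z := x
    have hsbz : ServedU c S γ c0 x := by rw [h]; exact hq3.symm
    exact core_bound hsac hsab hsbz (fun hh => hbc hh.symm) (fun hxa => hne3 ⟨hxa, h.symm⟩)

set_option maxHeartbeats 1000000 in
lemma bound_II [LinearOrder V] (hc : IsGallai c)
    (heq : ∀ v ∈ S, colorsOn c (S.erase v) = colorsOn c S)
    (hγ : γ ∈ colorsOn c S) (h3 : 3 ≤ (PP c S γ).card) :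
    (clsO c S γ).card ≤ 6 := by
  classical
  obtain ⟨T3, hT3sub, hT3card⟩ := Finset.exists_subset_card_eq h3
  obtain ⟨q1, q2, q3, h12, h13, h23, rfl⟩ := Finset.card_eq_three.1 hT3card
  have hq1 : q1 ∈ PP c S γ := hT3sub (by simp)
  have hq2 : q2 ∈ PP c S γ := hT3sub (by simp)
  have hq3 : q3 ∈ PP c S γ := hT3sub (by simp)
  rw [mem_PP] at hq1 hq2 hq3
  obtain ⟨-, hlt1, hs1⟩ := hq1
  obtain ⟨-, hlt2, hs2⟩ := hq2
  obtain ⟨-, hlt3, hs3⟩ := hq3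
  -- helper to conclude from a shared vertex between two sorted served pairs (r1, r2) plus a third r3
  have main : ∀ r1 r2 r3 : V × V, r1 ≠ r2 → r1 ≠ r3 → r2 ≠ r3 →
      r1.1 < r1.2 → r2.1 < r2.2 → r3.1 < r3.2 →
      ServedU c S γ r1.1 r1.2 → ServedU c S γ r2.1 r2.2 → ServedU c S γ r3.1 r3.2 →
      (r1.1 = r2.1 ∨ r1.1 = r2.2 ∨ r1.2 = r2.1 ∨ r1.2 = r2.2) →
      (clsO c S γ).card ≤ 6 := by
    intro r1 r2 r3 h12 h13 h23 hlt1 hlt2 hlt3 hs1 hs2 hs3 hshare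
    rcases hshare with h | h | h | h
    · -- a := r1.1 = r2.1, b := r1.2, c0 := r2.2 ; r1 = (a,b), r2 = (a,c0)
      have hsac : ServedU c S γ r1.1 r2.2 := by rw [h]; exact hs2
      have hbc : r1.2 ≠ r2.2 := by
        intro hh; exact h12 (Prod.ext h hh)
      refine share_case hc heq hγ hs1 hsac hbc hs3 ?_ ?_ ?_ ?_
      · rintro ⟨ha, hb⟩; exact h13 (Prod.ext ha.symm hb.symm)
      · rintro ⟨ha, hb⟩
        have : r1.2 < r1.1 := by rw [← ha, ← hb]; exact hlt3
        exact absurd hlt1 (asymm this)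
      · rintro ⟨ha, hb⟩
        exact h23 (Prod.ext (ha.trans h).symm hb.symm)
      · rintro ⟨ha, hb⟩
        have : r2.2 < r2.1 := by rw [← h, ← ha, ← hb]; exact hlt3
        exact absurd hlt2 (asymm this)
    · -- a := r1.1 = r2.2, b := r1.2, c0 := r2.1 ; r1 = (a,b), r2 = (c0,a)
      have hsac : ServedU c S γ r1.1 r2.1 := by rw [h]; exact hs2.symm
      have hbc : r1.2 ≠ r2.1 := by
        intro hh
        have : r2.1 < r2.2 := hlt2
        rw [← hh, ← h] at this
        exact absurd hlt1 (asymm this)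
      refine share_case hc heq hγ hs1 hsac hbc hs3 ?_ ?_ ?_ ?_
      · rintro ⟨ha, hb⟩; exact h13 (Prod.ext ha.symm hb.symm)
      · rintro ⟨ha, hb⟩
        have : r1.2 < r1.1 := by rw [← ha, ← hb]; exact hlt3
        exact absurd hlt1 (asymm this)
      · rintro ⟨ha, hb⟩
        have : r2.2 < r2.1 := by rw [← h, ← ha, ← hb]; exact hlt3
        exact absurd hlt2 (asymm this)
      · rintro ⟨ha, hb⟩
        exact h23 (Prod.ext ha.symm (hb.trans h).symm)
    · -- a := r1.2 = r2.1, b := r1.1, c0 := r2.2 ; r1 = (b,a), r2 = (a,c0)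
      have hsab : ServedU c S γ r1.2 r1.1 := hs1.symm
      have hsac : ServedU c S γ r1.2 r2.2 := by rw [h]; exact hs2
      have hbc : r1.1 ≠ r2.2 := by
        intro hh
        have : r2.1 < r2.2 := hlt2
        rw [← h, ← hh] at this
        exact absurd hlt1 (asymm this)
      refine share_case hc heq hγ hsab hsac hbc hs3 ?_ ?_ ?_ ?_
      · rintro ⟨ha, hb⟩
        have : r1.2 < r1.1 := by rw [← ha, ← hb]; exact hlt3
        exact absurd hlt1 (asymm this)
      · rintro ⟨ha, hb⟩; exact h13 (Prod.ext ha.symm hb.symm)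
      · rintro ⟨ha, hb⟩
        exact h23 (Prod.ext (ha.trans h).symm hb.symm)
      · rintro ⟨ha, hb⟩
        have : r2.2 < r2.1 := by rw [← h, ← ha, ← hb]; exact hlt3
        exact absurd hlt2 (asymm this)
    · -- a := r1.2 = r2.2, b := r1.1, c0 := r2.1 ; r1 = (b,a), r2 = (c0,a)
      have hsab : ServedU c S γ r1.2 r1.1 := hs1.symm
      have hsac : ServedU c S γ r1.2 r2.1 := by rw [h]; exact hs2.symm
      have hbc : r1.1 ≠ r2.1 := by
        intro hh; exact h12 (Prod.ext hh h)
      refine share_case hc heq hγ hsab hsac hbc hs3 ?_ ?_ ?_ ?_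
      · rintro ⟨ha, hb⟩
        have : r1.2 < r1.1 := by rw [← ha, ← hb]; exact hlt3
        exact absurd hlt1 (asymm this)
      · rintro ⟨ha, hb⟩; exact h13 (Prod.ext ha.symm hb.symm)
      · rintro ⟨ha, hb⟩
        have : r2.2 < r2.1 := by rw [← h, ← ha, ← hb]; exact hlt3
        exact absurd hlt2 (asymm this)
      · rintro ⟨ha, hb⟩
        exact h23 (Prod.ext ha.symm (hb.trans h).symm)
  -- case analysis on which two pairs share a vertex
  by_cases s12 : q1.1 = q2.1 ∨ q1.1 = q2.2 ∨ q1.2 = q2.1 ∨ q1.2 = q2.2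
  · exact main q1 q2 q3 h12 h13 h23 hlt1 hlt2 hlt3 hs1 hs2 hs3 s12
  by_cases s13 : q1.1 = q3.1 ∨ q1.1 = q3.2 ∨ q1.2 = q3.1 ∨ q1.2 = q3.2
  · exact main q1 q3 q2 h13 h12 (fun hh => h23 hh.symm) hlt1 hlt3 hlt2 hs1 hs3 hs2 s13
  by_cases s23 : q2.1 = q3.1 ∨ q2.1 = q3.2 ∨ q2.2 = q3.1 ∨ q2.2 = q3.2
  · exact main q2 q3 q1 h23 (fun hh => h12 hh.symm) (fun hh => h13 hh.symm)
      hlt2 hlt3 hlt1 hs2 hs3 hs1 s23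
  · -- all three pairs pairwise disjoint: impossible since some γ-edge exists
    exfalso
    push_neg at s12 s13 s23
    rw [mem_colorsOn] at hγ
    obtain ⟨p, hp, q, hq, hpq, hcpq⟩ := hγ
    have hE : EdgeOf c S γ p q := ⟨hp, hq, hpq, hcpq⟩
    have key12 : ∀ t : V, (t = q1.1 ∨ t = q1.2) → (t = q2.1 ∨ t = q2.2) → False := by
      rintro t (rfl | rfl) (h | h)
      · exact s12.1 h
      · exact s12.2.1 h
      · exact s12.2.2.1 h
      · exact s12.2.2.2 h
    have key13 : ∀ t : V, (t = q1.1 ∨ t = q1.2) → (t = q3.1 ∨ t = q3.2) → False := by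
      rintro t (rfl | rfl) (h | h)
      · exact s13.1 h
      · exact s13.2.1 h
      · exact s13.2.2.1 h
      · exact s13.2.2.2 h
    have key23 : ∀ t : V, (t = q2.1 ∨ t = q2.2) → (t = q3.1 ∨ t = q3.2) → False := by
      rintro t (rfl | rfl) (h | h)
      · exact s23.1 h
      · exact s23.2.1 h
      · exact s23.2.2.1 h
      · exact s23.2.2.2 h
    have c1 : (p = q1.1 ∨ p = q1.2) ∨ (q = q1.1 ∨ q = q1.2) := by
      rcases hs1.2.2.2 p q hE with h | h | h | h
      · exact Or.inl (Or.inl h)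
      · exact Or.inl (Or.inr h)
      · exact Or.inr (Or.inl h)
      · exact Or.inr (Or.inr h)
    have c2 : (p = q2.1 ∨ p = q2.2) ∨ (q = q2.1 ∨ q = q2.2) := by
      rcases hs2.2.2.2 p q hE with h | h | h | h
      · exact Or.inl (Or.inl h)
      · exact Or.inl (Or.inr h)
      · exact Or.inr (Or.inl h)
      · exact Or.inr (Or.inr h)
    have c3 : (p = q3.1 ∨ p = q3.2) ∨ (q = q3.1 ∨ q = q3.2) := by
      rcases hs3.2.2.2 p q hE with h | h | h | h
      · exact Or.inl (Or.inl h)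
      · exact Or.inl (Or.inr h)
      · exact Or.inr (Or.inl h)
      · exact Or.inr (Or.inr h)
    rcases c1 with h | h <;> rcases c2 with g | g <;> rcases c3 with f | f
    · exact key12 p h g
    · exact key12 p h g
    · exact key13 p h f
    · exact key23 q g f
    · exact key23 p g f
    · exact key13 q h f
    · exact key12 q h g
    · exact key12 q h g

end LemmaL4

section LemmaL5
variable {V β : Type*} [DecidableEq V] [DecidableEq β] {c : V → V → β} {S : Finset V} {γ : β}

set_option maxHeartbeats 1000000 in
lemma bound_I [LinearOrder V] (hc : IsGallai c)
    (heq : ∀ v ∈ S, colorsOn c (S.erase v) = colorsOn c S)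
    (hγ : γ ∈ colorsOn c S) :
    (PP c S γ).card ≤ 4 ∧
    ((PP c S γ).card = 4 → ∃ a b d e : V, a ≠ b ∧ d ≠ e ∧ a ≠ d ∧ a ≠ e ∧ b ≠ d ∧ b ≠ e ∧
      clsO c S γ = ({(a, b), (b, a), (d, e), (e, d)} : Finset (V × V))) := by
  classical
  have pack : ∀ a b d e : V, EdgeOf c S γ a b → EdgeOf c S γ d e →
      a ≠ d → a ≠ e → b ≠ d → b ≠ e →
      (PP c S γ).card ≤ 4 ∧
      ((PP c S γ).card = 4 → ∃ a b d e : V, a ≠ b ∧ d ≠ e ∧ a ≠ d ∧ a ≠ e ∧ b ≠ d ∧ b ≠ e ∧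
        clsO c S γ = ({(a, b), (b, a), (d, e), (e, d)} : Finset (V × V))) := by
    intro a b d e hE1 hE2 h1 h2 h3 h4
    obtain ⟨hle, hext⟩ := cross_bound hE1 hE2 h1 h2 h3 h4
    refine ⟨hle, fun h4' => ?_⟩
    exact ⟨a, b, d, e, hE1.2.2.1, hE2.2.2.1, h1, h2, h3, h4,
      cross_class hc hE1 hE2 h1 h2 h3 h4 (hext h4')⟩
  by_cases hP : (PP c S γ).Nonempty
  swap
  · rw [Finset.not_nonempty_iff_eq_empty] at hP
    rw [hP]
    simp
  obtain ⟨q0, hq0⟩ := hP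
  rcases q0 with ⟨u, v⟩
  rw [mem_PP] at hq0
  dsimp only at hq0
  obtain ⟨⟨huS, hvS, huv⟩, hlt0, hsv0⟩ := hq0
  obtain ⟨p1, p2, hEa, hp1u, hp2u⟩ := exists_edge_avoiding heq hγ huS
  obtain ⟨w1, hE1, hw1u, hw1v⟩ : ∃ w1, EdgeOf c S γ v w1 ∧ w1 ≠ u ∧ w1 ≠ v := by
    rcases hsv0.2.2.2 p1 p2 hEa with h | h | h | h
    · exact absurd h hp1u
    · rw [h] at hEa
      exact ⟨p2, hEa, hp2u, (hEa.2.2.1).symm⟩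
    · exact absurd h hp2u
    · rw [h] at hEa
      exact ⟨p1, hEa.symm hc, hp1u, ((hEa.symm hc).2.2.1).symm⟩
  obtain ⟨p1', p2', hEb, hp1v, hp2v⟩ := exists_edge_avoiding heq hγ hvS
  obtain ⟨w2, hE2, hw2u, hw2v⟩ : ∃ w2, EdgeOf c S γ u w2 ∧ w2 ≠ u ∧ w2 ≠ v := by
    rcases hsv0.2.2.2 p1' p2' hEb with h | h | h | h
    · rw [h] at hEb
      exact ⟨p2', hEb, (hEb.2.2.1).symm, hp2v⟩
    · exact absurd h hp1v
    · rw [h] at hEb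
      exact ⟨p1', hEb.symm hc, ((hEb.symm hc).2.2.1).symm, hp1v⟩
    · exact absurd h hp2v
  have hvu : v ≠ u := fun h => huv h.symm
  by_cases hww : w1 = w2
  · -- shared neighbor w1
    rw [← hww] at hE2
    have hw1S : w1 ∈ S := hE1.2.1
    obtain ⟨p3, p4, hEc, hp3w, hp4w⟩ := exists_edge_avoiding heq hγ hw1S
    have htri : ∀ hEuv : EdgeOf c S γ u v, (PP c S γ).card ≤ 4 ∧
        ((PP c S γ).card = 4 → ∃ a b d e : V, a ≠ b ∧ d ≠ e ∧ a ≠ d ∧ a ≠ e ∧ b ≠ d ∧ b ≠ e ∧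
          clsO c S γ = ({(a, b), (b, a), (d, e), (e, d)} : Finset (V × V))) := by
      intro hEuv
      have h3 := triangle_bound hEuv hE1 hE2
      exact ⟨by omega, fun h4 => by omega⟩
    rcases hsv0.2.2.2 p3 p4 hEc with h | h | h | h
    · rw [h] at hEc
      by_cases ht : p4 = v
      · rw [ht] at hEc
        exact htri hEc
      · -- disjoint edges (v,w1), (u,p4)
        exact pack v w1 u p4 hE1 hEc hvu (fun hh => ht hh.symm) hw1u (fun hh => hp4w hh.symm)
    · rw [h] at hEc
      by_cases ht : p4 = u
      · rw [ht] at hEc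
        exact htri (hEc.symm hc)
      · -- disjoint edges (u,w1), (v,p4)
        exact pack u w1 v p4 hE2 hEc huv (fun hh => ht hh.symm) hw1v (fun hh => hp4w hh.symm)
    · rw [h] at hEc
      have hEc' := hEc.symm hc
      by_cases ht : p3 = v
      · rw [ht] at hEc'
        exact htri hEc'
      · exact pack v w1 u p3 hE1 hEc' hvu (fun hh => ht hh.symm) hw1u (fun hh => hp3w hh.symm)
    · rw [h] at hEc
      have hEc' := hEc.symm hc
      by_cases ht : p3 = u
      · rw [ht] at hEc'
        exact htri (hEc'.symm hc)
      · exact pack u w1 v p3 hE2 hEc' huv (fun hh => ht hh.symm) hw1v (fun hh => hp3w hh.symm)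
  · -- disjoint edges (v,w1), (u,w2)
    exact pack v w1 u w2 hE1 hE2 hvu (fun hh => hw2v hh.symm) hw1u hww

end LemmaL5

section LemmaL6
variable {V β : Type*} [DecidableEq V] [DecidableEq β] {c : V → V → β}

lemma quad_no {a b d e x y z : V} (hab : a ≠ b) (hde : d ≠ e) (had : a ≠ d) (hae : a ≠ e)
    (hbd : b ≠ d) (hbe : b ≠ e) (hyz : y ≠ z)
    (h1 : (x, y) ∈ ({(a, b), (b, a), (d, e), (e, d)} : Finset (V × V)))
    (h2 : (x, z) ∈ ({(a, b), (b, a), (d, e), (e, d)} : Finset (V × V))) : False := by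
  simp only [Finset.mem_insert, Finset.mem_singleton, Prod.mk.injEq] at h1 h2
  rcases h1 with ⟨rfl, rfl⟩ | ⟨rfl, rfl⟩ | ⟨rfl, rfl⟩ | ⟨rfl, rfl⟩ <;>
    rcases h2 with ⟨h, h'⟩ | ⟨h, h'⟩ | ⟨h, h'⟩ | ⟨h, h'⟩ <;> simp_all

set_option maxHeartbeats 2000000 in
/-- Main structural lemma: a Gallai coloring of at least 5 vertices using at least
`|S| - 2` colors has a vertex whose deletion kills a color. -/
lemma gallai_drop [LinearOrder V] (hc : IsGallai c) {S : Finset V} (h5 : 5 ≤ S.card)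
    (ht : S.card - 2 ≤ (colorsOn c S).card) :
    ∃ v ∈ S, (colorsOn c (S.erase v)).card < (colorsOn c S).card := by
  classical
  by_contra hdrop
  push_neg at hdrop
  have heq : ∀ v ∈ S, colorsOn c (S.erase v) = colorsOn c S := fun v hv =>
    Finset.eq_of_subset_of_card_le (colorsOn_mono (Finset.erase_subset _ _)) (hdrop v hv)
  obtain ⟨v0, hv0⟩ := Finset.card_pos.1 (show 0 < S.card by omega)
  have htt : (colorsOn c S).card = S.card - 2 := by
    have h1 := card_colorsOn_le hc (S.card - 1) (S.erase v0) (Finset.card_erase_of_mem hv0)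
    rw [heq v0 hv0] at h1
    omega
  have hF2 := two_mul_card_filter_lt S
  set pairsLT := S.offDiag.filter (fun p => p.1 < p.2) with hpairs
  have hserve : ∀ q ∈ pairsLT, ∃ γ ∈ colorsOn c S, q ∈ PP c S γ := by
    intro q hq
    rw [hpairs, Finset.mem_filter, Finset.mem_offDiag] at hq
    obtain ⟨⟨hq1S, hq2S, hne⟩, hlt⟩ := hq
    obtain ⟨γ, hγc, hγs⟩ := exists_served hc heq htt h5 hq1S hq2S hne
    exact ⟨γ, hγc, mem_PP.2 ⟨⟨hq1S, hq2S, hne⟩, hlt, hγs⟩⟩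
  have hF3 : pairsLT.card ≤ ∑ γ ∈ colorsOn c S, (PP c S γ).card := by
    calc pairsLT.card ≤ ((colorsOn c S).biUnion (PP c S)).card :=
        Finset.card_le_card (fun q hq => Finset.mem_biUnion.2 (hserve q hq))
      _ ≤ ∑ γ ∈ colorsOn c S, (PP c S γ).card := Finset.card_biUnion_le
  have hF1 : ∑ γ ∈ colorsOn c S, (clsO c S γ).card = S.card * S.card - S.card := by
    have hfib : ∀ p ∈ S.offDiag, c p.1 p.2 ∈ colorsOn c S := by
      intro p hp
      rw [Finset.mem_offDiag] at hp
      exact mem_colorsOn.2 ⟨p.1, hp.1, p.2, hp.2.1, hp.2.2, rfl⟩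
    have h := Finset.card_eq_sum_card_fiberwise hfib
    rw [Finset.offDiag_card] at h
    rw [h]
    rfl
  set A := (colorsOn c S).filter (fun γ => 3 ≤ (PP c S γ).card) with hA
  clear_value A
  have hsplit := Finset.sum_filter_add_sum_filter_not (colorsOn c S)
    (fun γ => 3 ≤ (PP c S γ).card) (fun γ => (PP c S γ).card)
  have hsumA : ∑ γ ∈ A, (PP c S γ).card ≤ A.card * 4 := by
    apply Finset.sum_le_card_nsmul
    intro γ hγ
    rw [hA, Finset.mem_filter] at hγ
    exact (bound_I hc heq hγ.1).1
  have hsumB : ∑ γ ∈ (colorsOn c S).filter (fun γ => ¬ 3 ≤ (PP c S γ).card), (PP c S γ).card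
      ≤ ((colorsOn c S).filter (fun γ => ¬ 3 ≤ (PP c S γ).card)).card * 2 := by
    apply Finset.sum_le_card_nsmul
    intro γ hγ
    have := (Finset.mem_filter.1 hγ).2
    omega
  have hABcard := Finset.card_filter_add_card_filter_not
    (s := colorsOn c S) (p := fun γ => 3 ≤ (PP c S γ).card)
  rw [← hA] at hsplit hABcard
  have hsq : S.card ≤ S.card * S.card := Nat.le_mul_of_pos_left _ (by omega)
  -- master inequality
  have hmaster : S.card * S.card - S.card ≤ 4 * A.card + 4 * (S.card - 2) := by
    have h1 : ∑ γ ∈ colorsOn c S, (PP c S γ).card ≤ A.card * 4 +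
        ((colorsOn c S).filter (fun γ => ¬ 3 ≤ (PP c S γ).card)).card * 2 := by
      rw [← hsplit]; exact Nat.add_le_add hsumA hsumB
    omega
  have hAle : A.card ≤ S.card - 2 := by
    rw [hA]
    have := Finset.card_filter_le (colorsOn c S) (fun γ => 3 ≤ (PP c S γ).card)
    omega
  -- s ≤ 6
  have hs6 : S.card ≤ 6 := by
    by_contra hgt
    push_neg at hgt
    have hkey : S.card * S.card + 16 ≤ 9 * S.card := by omega
    have hlt9 : S.card < 9 := by
      have h0 : S.card * S.card < 9 * S.card := by omega
      exact Nat.lt_of_mul_lt_mul_right h0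
    have h78 : S.card = 7 ∨ S.card = 8 := by omega
    rcases h78 with h | h <;> rw [h] at hkey <;> omega
  have hscases : S.card = 5 ∨ S.card = 6 := by omega
  rcases hscases with hs5 | hs6'
  · -- s = 5
    have hcol3 : (colorsOn c S).card = 3 := by omega
    have hp10 : pairsLT.card = 10 := by
      rw [hs5] at hF2; omega
    have hA2 : 2 ≤ A.card := by
      rw [hs5] at hmaster; omega
    rcases Nat.lt_or_ge A.card 3 with hA2' | hA3
    swap
    · -- A = colors, all classes ≤ 6, but total 20
      have hAeq : A = colorsOn c S :=
        Finset.eq_of_subset_of_card_le (by rw [hA]; exact Finset.filter_subset _ _) (by omega)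
      have hcls : ∑ γ ∈ colorsOn c S, (clsO c S γ).card ≤ (colorsOn c S).card * 6 := by
        apply Finset.sum_le_card_nsmul
        intro γ hγ
        have hγA : γ ∈ A := hAeq ▸ hγ
        rw [hA, Finset.mem_filter] at hγA
        exact bound_II hc heq hγ hγA.2
      rw [hF1, hs5, hcol3] at *
      omega
    · -- |A| = 2
      have hA2'' : A.card = 2 := by omega
      obtain ⟨γ1, γ2, hγ12, hAeq⟩ := Finset.card_eq_two.1 hA2''
      have hγ1A : γ1 ∈ A := by rw [hAeq]; simp
      have hγ2A : γ2 ∈ A := by rw [hAeq]; simp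
      have hγ1c : γ1 ∈ colorsOn c S := by
        have := hγ1A; rw [hA, Finset.mem_filter] at this; exact this.1
      have hγ2c : γ2 ∈ colorsOn c S := by
        have := hγ2A; rw [hA, Finset.mem_filter] at this; exact this.1
      -- the third color
      have hsd : ((colorsOn c S) \ A).card = 1 := by
        rw [Finset.card_sdiff_of_subset (by rw [hA]; exact Finset.filter_subset _ _)]
        omega
      obtain ⟨γ3, hγ3eq⟩ := Finset.card_eq_one.1 hsd
      have hγ3mem : γ3 ∈ (colorsOn c S) \ A := by rw [hγ3eq]; simp
      have hγ3c : γ3 ∈ colorsOn c S := (Finset.mem_sdiff.1 hγ3mem).1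
      have hγ3A : γ3 ∉ A := (Finset.mem_sdiff.1 hγ3mem).2
      have hγ31 : γ3 ≠ γ1 := fun h => hγ3A (h ▸ hγ1A)
      have hγ32 : γ3 ≠ γ2 := fun h => hγ3A (h ▸ hγ2A)
      have hcolorseq : colorsOn c S = {γ1, γ2, γ3} := by
        apply Finset.eq_of_subset_of_card_le _ _ |>.symm
        · intro γ hγ
          simp only [Finset.mem_insert, Finset.mem_singleton] at hγ
          rcases hγ with rfl | rfl | rfl
          · exact hγ1c
          · exact hγ2c
          · exact hγ3c
        · rw [hcol3]
          have : ({γ1, γ2, γ3} : Finset β).card = 3 := by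
            rw [Finset.card_insert_of_notMem, Finset.card_insert_of_notMem, Finset.card_singleton]
            · simp [Ne.symm hγ32]
            · simp [hγ12, Ne.symm hγ31]
          omega
      have hsum3 : (PP c S γ1).card + (PP c S γ2).card + (PP c S γ3).card
          ≥ pairsLT.card := by
        have h := hF3
        rw [hcolorseq] at h
        rw [Finset.sum_insert (by simp [hγ12, Ne.symm hγ31]),
          Finset.sum_insert (by simp [Ne.symm hγ32])] at h
        rw [Finset.sum_singleton] at h
        omega
      have hPP3le : (PP c S γ3).card ≤ 2 := by
        have := hγ3A
        rw [hA, Finset.mem_filter] at this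
        push_neg at this
        have := this hγ3c
        omega
      have hPP1le := (bound_I hc heq hγ1c).1
      have hPP2le := (bound_I hc heq hγ2c).1
      have hPP1 : (PP c S γ1).card = 4 := by omega
      have hPP2 : (PP c S γ2).card = 4 := by omega
      have hPP3pos : 0 < (PP c S γ3).card := by omega
      obtain ⟨a1, b1, d1, e1, h1ab, h1de, h1ad, h1ae, h1bd, h1be, hcls1⟩ :=
        (bound_I hc heq hγ1c).2 hPP1
      obtain ⟨a2, b2, d2, e2, h2ab, h2de, h2ad, h2ae, h2bd, h2be, hcls2⟩ :=
        (bound_I hc heq hγ2c).2 hPP2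
      obtain ⟨q, hq⟩ := Finset.card_pos.1 hPP3pos
      rw [mem_PP] at hq
      obtain ⟨⟨huS, hvS, huv⟩, hlt, hsv3⟩ := hq
      -- the three remaining vertices
      have hTcard : ((S.erase q.1).erase q.2).card = 3 := by
        rw [Finset.card_erase_of_mem (Finset.mem_erase.2 ⟨fun h => huv h.symm, hvS⟩),
          Finset.card_erase_of_mem huS, hs5]
      obtain ⟨x, y, z, hxy, hxz, hyz, hTeq⟩ := Finset.card_eq_three.1 hTcard
      have hmemT : ∀ t : V, t ∈ ((S.erase q.1).erase q.2) → t ∈ S ∧ t ≠ q.1 ∧ t ≠ q.2 := by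
        intro t ht
        obtain ⟨ht2, ht1⟩ := Finset.mem_erase.1 ht
        obtain ⟨ht1', htS⟩ := Finset.mem_erase.1 ht1
        exact ⟨htS, ht1', ht2⟩
      have hx := hmemT x (by rw [hTeq]; simp)
      have hy := hmemT y (by rw [hTeq]; simp)
      have hz := hmemT z (by rw [hTeq]; simp)
      -- colors of the three internal edges are γ1 or γ2
      have hcolor12 : ∀ p r : V, p ∈ S → r ∈ S → p ≠ r → p ≠ q.1 → p ≠ q.2 → r ≠ q.1 → r ≠ q.2 →
          c p r = γ1 ∨ c p r = γ2 := by
        intro p r hpS hrS hpr hp1 hp2 hr1 hr2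
        have hmem : c p r ∈ colorsOn c S := mem_colorsOn.2 ⟨p, hpS, r, hrS, hpr, rfl⟩
        have hne3 : c p r ≠ γ3 := by
          intro hcol
          rcases hsv3.2.2.2 p r ⟨hpS, hrS, hpr, hcol⟩ with h | h | h | h
          · exact hp1 h
          · exact hp2 h
          · exact hr1 h
          · exact hr2 h
        rw [hcolorseq] at hmem
        simp only [Finset.mem_insert, Finset.mem_singleton] at hmem
        tauto
      have hxy12 := hcolor12 x y hx.1 hy.1 hxy hx.2.1 hx.2.2 hy.2.1 hy.2.2
      have hxz12 := hcolor12 x z hx.1 hz.1 hxz hx.2.1 hx.2.2 hz.2.1 hz.2.2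
      have hyz12 := hcolor12 y z hy.1 hz.1 hyz hy.2.1 hy.2.2 hz.2.1 hz.2.2
      -- two of the three edges share a color
      have hmemcls : ∀ p r : V, p ∈ S → r ∈ S → p ≠ r → (p, r) ∈ clsO c S (c p r) := by
        intro p r hpS hrS hpr
        exact mem_clsO.2 ⟨hpS, hrS, hpr, rfl⟩
      have hfinal : False := by
        have hpg : (c x y = c x z) ∨ (c x y = c y z) ∨ (c x z = c y z) := by
          rcases hxy12 with h | h <;> rcases hxz12 with g | g <;> rcases hyz12 with f | f
          · exact Or.inl (h.trans g.symm)
          · exact Or.inl (h.trans g.symm)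
          · exact Or.inr (Or.inl (h.trans f.symm))
          · exact Or.inr (Or.inr (g.trans f.symm))
          · exact Or.inr (Or.inr (g.trans f.symm))
          · exact Or.inr (Or.inl (h.trans f.symm))
          · exact Or.inl (h.trans g.symm)
          · exact Or.inl (h.trans g.symm)
        have hquad : ∀ γ' : β, γ' = γ1 ∨ γ' = γ2 → ∀ p r t : V, r ≠ t →
            (p, r) ∈ clsO c S γ' → (p, t) ∈ clsO c S γ' → False := by
          intro γ' hγ' p r t hrt hm1 hm2
          rcases hγ' with rfl | rfl
          · rw [hcls1] at hm1 hm2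
            exact quad_no h1ab h1de h1ad h1ae h1bd h1be hrt hm1 hm2
          · rw [hcls2] at hm1 hm2
            exact quad_no h2ab h2de h2ad h2ae h2bd h2be hrt hm1 hm2
        rcases hpg with h | h | h
        · -- c x y = c x z
          have hm1 := hmemcls x y hx.1 hy.1 hxy
          have hm2 := hmemcls x z hx.1 hz.1 hxz
          rw [← h] at hm2
          exact hquad (c x y) hxy12 x y z hyz hm1 hm2
        · -- c x y = c y z ; use pairs (y,x), (y,z)
          have hm1 := hmemcls y x hy.1 hx.1 (Ne.symm hxy)
          have hm2 := hmemcls y z hy.1 hz.1 hyz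
          rw [← h] at hm2
          have hcyx : c y x = c x y := hc.1 y x
          rw [hcyx] at hm1
          exact hquad (c x y) hxy12 y x z hxz hm1 hm2
        · -- c x z = c y z ; use pairs (z,x), (z,y)
          have hm1 := hmemcls z x hz.1 hx.1 (Ne.symm hxz)
          have hm2 := hmemcls z y hz.1 hy.1 (Ne.symm hyz)
          have h1' : c z x = c x z := hc.1 z x
          have h2' : c z y = c y z := hc.1 z y
          rw [h1'] at hm1
          rw [h2', ← h] at hm2
          exact hquad (c x z) hxz12 z x y hxy hm1 hm2
      exact hfinal
  · -- s = 6
    have hcol4 : (colorsOn c S).card = 4 := by omega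
    have hp15 : pairsLT.card = 15 := by
      rw [hs6'] at hF2; omega
    have hA4 : 4 ≤ A.card := by
      rw [hs6'] at hmaster; omega
    have hAeq : A = colorsOn c S :=
      Finset.eq_of_subset_of_card_le (by rw [hA]; exact Finset.filter_subset _ _) (by omega)
    have hcls : ∑ γ ∈ colorsOn c S, (clsO c S γ).card ≤ (colorsOn c S).card * 6 := by
      apply Finset.sum_le_card_nsmul
      intro γ hγ
      have hγA : γ ∈ A := hAeq ▸ hγ
      rw [hA, Finset.mem_filter] at hγA
      exact bound_II hc heq hγ hγA.2
    rw [hF1, hs6', hcol4] at *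
    omega

end LemmaL6

section Descent
variable {V β : Type*} [DecidableEq V] [DecidableEq β] {c : V → V → β}

lemma descent [LinearOrder V] (hc : IsGallai c) (p : ℕ) (hp : 4 ≤ p) :
    ∀ (m : ℕ) (S : Finset V), S.card = m → p ≤ m → (colorsOn c S).card ≤ m - 2 →
    ∃ S' ⊆ S, S'.card = p ∧ (colorsOn c S').card ≤ p - 2 := by
  intro m
  induction m with
  | zero => intro S h hpm; omega
  | succ n ih =>
    intro S hcard hpm hcol
    rcases Nat.eq_or_lt_of_le hpm with heq' | hlt
    · exact ⟨S, Finset.Subset.refl S, by omega, by omega⟩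
    have h5 : 5 ≤ S.card := by omega
    rcases Nat.lt_or_ge (colorsOn c S).card (S.card - 2) with hsmall | hbig
    · obtain ⟨v, hv⟩ := Finset.card_pos.1 (show 0 < S.card by omega)
      have hce : (S.erase v).card = n := by
        rw [Finset.card_erase_of_mem hv]; omega
      have hcole : (colorsOn c (S.erase v)).card ≤ n - 2 := by
        have h1 := Finset.card_le_card (colorsOn_mono (c := c) (Finset.erase_subset v S))
        omega
      obtain ⟨S', hS'sub, hS'⟩ := ih (S.erase v) hce (by omega) hcole
      exact ⟨S', hS'sub.trans (Finset.erase_subset _ _), hS'⟩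
    · obtain ⟨v, hv, hdrop⟩ := gallai_drop hc h5 hbig
      have hce : (S.erase v).card = n := by
        rw [Finset.card_erase_of_mem hv]; omega
      have hcole : (colorsOn c (S.erase v)).card ≤ n - 2 := by omega
      obtain ⟨S', hS'sub, hS'⟩ := ih (S.erase v) hce (by omega) hcole
      exact ⟨S', hS'sub.trans (Finset.erase_subset _ _), hS'⟩

end Descent

section MinColoring

def minc (k m : ℕ) (hk0 : 0 < k) : Fin m → Fin m → Fin k :=
  fun i j => if h : min i.val j.val < k then ⟨min i.val j.val, h⟩ else ⟨0, hk0⟩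

lemma minc_cong {k m : ℕ} {hk0 : 0 < k} {x y u v : Fin m}
    (h : min x.val y.val = min u.val v.val) : minc k m hk0 x y = minc k m hk0 u v := by
  simp only [minc, h]

lemma minc_gallai (k m : ℕ) (hk0 : 0 < k) : IsGallai (minc k m hk0) := by
  constructor
  · intro a b
    exact minc_cong (Nat.min_comm _ _)
  · intro a b d hab had hbd
    rintro ⟨h1, h2, h3⟩
    have hm : min a.val b.val = min a.val d.val ∨ min a.val b.val = min b.val d.val ∨
        min a.val d.val = min b.val d.val := by omega
    rcases hm with h | h | h
    · exact h1 (minc_cong h)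
    · exact h2 (minc_cong h)
    · exact h3 (minc_cong h)

lemma minc_lower (k m : ℕ) (hk0 : 0 < k) (hm : m ≤ k + 1) (p : ℕ) (hp : 1 ≤ p) :
    ∀ S : Finset (Fin m), S.card = p → p - 1 ≤ (colorsOn (minc k m hk0) S).card := by
  intro S hScard
  have hne : S.Nonempty := by rw [← Finset.card_pos, hScard]; omega
  set M := S.max' hne with hM
  have hMS : M ∈ S := S.max'_mem hne
  have hlt : ∀ x ∈ S.erase M, x < M := by
    intro x hx
    exact S.lt_max'_of_mem_erase_max' hne hx
  have hval : ∀ x ∈ S.erase M, (minc k m hk0 x M).val = x.val := by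
    intro x hx
    have h1 : x.val < M.val := hlt x hx
    have h2 : M.val < m := M.isLt
    have hxk : x.val < k := by omega
    have hmin : min x.val M.val = x.val := Nat.min_eq_left (le_of_lt h1)
    simp only [minc, hmin, dif_pos hxk]
  have hinj : Set.InjOn (fun x => minc k m hk0 x M) (S.erase M) := by
    intro x hx y hy hxy
    rw [Finset.mem_coe] at hx hy
    have h1 := hval x hx
    have h2 := hval y hy
    apply Fin.ext
    rw [← h1, ← h2]
    exact congrArg Fin.val hxy
  have hsub : (S.erase M).image (fun x => minc k m hk0 x M) ⊆ colorsOn (minc k m hk0) S := by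
    intro γ hγ
    obtain ⟨x, hx, rfl⟩ := Finset.mem_image.1 hγ
    obtain ⟨hxM, hxS⟩ := Finset.mem_erase.1 hx
    exact mem_colorsOn.2 ⟨x, hxS, M, hMS, hxM, rfl⟩
  have hcard : ((S.erase M).image (fun x => minc k m hk0 x M)).card = p - 1 := by
    rw [Finset.card_image_of_injOn hinj, Finset.card_erase_of_mem hMS, hScard]
  calc p - 1 = ((S.erase M).image (fun x => minc k m hk0 x M)).card := hcard.symm
    _ ≤ (colorsOn (minc k m hk0) S).card := Finset.card_le_card hsub

end MinColoring

/-- `gallaiNum k q p` is the smallest positive `n` such that every Gallai-`k`-coloring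
of `K_n` contains a set of `p` vertices whose induced edges use at most `q` colors. -/
noncomputable def gallaiNum (k q p : ℕ) : ℕ :=
  sInf {n : ℕ | 0 < n ∧ ∀ c : Fin n → Fin n → Fin k, IsGallai c →
    ∃ S : Finset (Fin n), S.card = p ∧ (colorsOn c S).card ≤ q}

theorem gallaiNum_q_eq_p_sub_two (p k : ℕ) (hp : 4 ≤ p) (hk : p - 2 ≤ k) :
    gallaiNum k (p - 2) p = k + 2 ∧
    (∀ c : Fin (k + 2) → Fin (k + 2) → Fin k, IsGallai c →
      ∃ S : Finset (Fin (k + 2)), S.card = p ∧ (colorsOn c S).card ≤ p - 2) ∧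
    (∃ c : Fin (k + 1) → Fin (k + 1) → Fin k, IsGallai c ∧
      ∀ S : Finset (Fin (k + 1)), S.card = p → p - 1 ≤ (colorsOn c S).card) := by
  have hk0 : 0 < k := by omega
  have upper : ∀ c : Fin (k + 2) → Fin (k + 2) → Fin k, IsGallai c →
      ∃ S : Finset (Fin (k + 2)), S.card = p ∧ (colorsOn c S).card ≤ p - 2 := by
    intro c hc
    have hcard : (Finset.univ : Finset (Fin (k + 2))).card = k + 2 := by simp
    have hcol : (colorsOn c Finset.univ).card ≤ (k + 2) - 2 := by
      have h1 : colorsOn c Finset.univ ⊆ (Finset.univ : Finset (Fin k)) :=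
        fun γ _ => Finset.mem_univ γ
      have h2 := Finset.card_le_card h1
      have h3 : (Finset.univ : Finset (Fin k)).card = k := by simp
      omega
    obtain ⟨S', _, hS'card, hS'col⟩ :=
      descent hc p hp (k + 2) Finset.univ hcard (by omega) hcol
    exact ⟨S', hS'card, hS'col⟩
  have lower : ∃ c : Fin (k + 1) → Fin (k + 1) → Fin k, IsGallai c ∧
      ∀ S : Finset (Fin (k + 1)), S.card = p → p - 1 ≤ (colorsOn c S).card :=
    ⟨minc k (k + 1) hk0, minc_gallai k (k + 1) hk0,
      minc_lower k (k + 1) hk0 (le_refl _) p (by omega)⟩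
  refine ⟨?_, upper, lower⟩
  have hmem : (k + 2) ∈ {n : ℕ | 0 < n ∧ ∀ c : Fin n → Fin n → Fin k, IsGallai c →
      ∃ S : Finset (Fin n), S.card = p ∧ (colorsOn c S).card ≤ p - 2} :=
    ⟨by omega, upper⟩
  apply le_antisymm
  · exact Nat.sInf_le hmem
  · apply le_csInf ⟨k + 2, hmem⟩
    intro n hn
    obtain ⟨hn0, hnP⟩ := hn
    by_contra hlt
    push_neg at hlt
    rcases Nat.lt_or_ge n p with hnp | hnp
    · obtain ⟨S, hScard, -⟩ := hnP (fun _ _ => (⟨0, hk0⟩ : Fin k))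
        ⟨fun _ _ => rfl, fun _ _ _ _ _ _ h => h.1 rfl⟩
      have h1 := Finset.card_le_card (Finset.subset_univ S)
      have h2 : (Finset.univ : Finset (Fin n)).card = n := by simp
      omega
    · obtain ⟨S, hScard, hScol⟩ := hnP (minc k n hk0) (minc_gallai k n hk0)
      have := minc_lower k n hk0 (by omega) p (by omega) S hScard
      omega
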